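/- Let y = A_P β* + δ + ε where β* has support in index set P, and let β̂₀ minimize the non-negative LASSO restricted to support P. If for all z ≤ 1 (componentwise) the irrepresentability condition G_{P̄,P} G_{P,P}^{-1} z < (1−η₀)·1 holds for some 0 < η₀ < 1, then a sufficient condition for β̂₀ to be a global minimizer of the unrestricted non-negative LASSO is max_i (1/√N) H_iᵀ(δ + ε) < r·η₀, where H_i are the columns of H = A_{P̄}/√N − (A_P/√N)G_{P,P}^{-1}G_{P,P̄}. -/

import Mathlib

open Matrix

variable {N M : ℕ}

/-- Submatrix of columns indexed by `P`. -/
def colsIn (A : Matrix (Fin N) (Fin M) ℝ) (P : Finset (Fin M)) :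
    Matrix (Fin N) {j : Fin M // j ∈ P} ℝ :=
  A.submatrix id (fun j => j.val)

/-- Submatrix of columns indexed by the complement of `P`. -/
def colsOut (A : Matrix (Fin N) (Fin M) ℝ) (P : Finset (Fin M)) :
    Matrix (Fin N) {j : Fin M // j ∉ P} ℝ :=
  A.submatrix id (fun j => j.val)

/-- Block Gram matrix `G_{P,P} = (1/N) A_Pᵀ A_P`. -/
noncomputable def gramPP (A : Matrix (Fin N) (Fin M) ℝ) (P : Finset (Fin M)) :
    Matrix {j : Fin M // j ∈ P} {j : Fin M // j ∈ P} ℝ :=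
  (N : ℝ)⁻¹ • ((colsIn A P)ᵀ * colsIn A P)

/-- Block Gram matrix `G_{P̄,P} = (1/N) A_{P̄}ᵀ A_P`. -/
noncomputable def gramCP (A : Matrix (Fin N) (Fin M) ℝ) (P : Finset (Fin M)) :
    Matrix {j : Fin M // j ∉ P} {j : Fin M // j ∈ P} ℝ :=
  (N : ℝ)⁻¹ • ((colsOut A P)ᵀ * colsIn A P)

/-- `H = A_{P̄}/√N − (A_P/√N) G_{P,P}⁻¹ G_{P,P̄}`. -/
noncomputable def matH (A : Matrix (Fin N) (Fin M) ℝ) (P : Finset (Fin M)) :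
    Matrix (Fin N) {j : Fin M // j ∉ P} ℝ :=
  (Real.sqrt N)⁻¹ •
    (colsOut A P - colsIn A P * (gramPP A P)⁻¹ * ((N : ℝ)⁻¹ • ((colsIn A P)ᵀ * colsOut A P)))

set_option maxHeartbeats 4000000 in
/-- under the irrepresentability condition, if the restricted (support in
`P`) non-negative LASSO minimizer `β̂₀` satisfies the correlated-residual bound
`max_i (1/√N) H_iᵀ(δ+ε) < rη₀`, then `β̂₀` is a global minimizer of the unrestricted
non-negative LASSO. -/
theorem stmt_15 (N M : ℕ) (hN : 0 < N) (A : Matrix (Fin N) (Fin M) ℝ)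
    (P : Finset (Fin M)) (hG : IsUnit (gramPP A P).det)
    (βstar : Fin M → ℝ) (hβstar : ∀ j, j ∉ P → βstar j = 0)
    (d e y : Fin N → ℝ) (hy : y = fun i => A.mulVec βstar i + d i + e i)
    (r η₀ : ℝ) (hr : 0 < r) (hη₀ : 0 < η₀) (hη₀' : η₀ < 1)
    (β₀ : Fin M → ℝ) (hβ₀pos : ∀ n, 0 ≤ β₀ n) (hβ₀supp : ∀ j, j ∉ P → β₀ j = 0)
    (hβ₀min : ∀ b : Fin M → ℝ, (∀ n, 0 ≤ b n) → (∀ j, j ∉ P → b j = 0) →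
      (1 / (2 * N)) * ∑ i, (y i - A.mulVec β₀ i) ^ 2 + r * ∑ n, β₀ n ≤
        (1 / (2 * N)) * ∑ i, (y i - A.mulVec b i) ^ 2 + r * ∑ n, b n)
    (z : {j : Fin M // j ∈ P} → ℝ) (hz : ∀ j, z j ≤ 1)
    (hKKT : ∀ j : {j : Fin M // j ∈ P},
      (N : ℝ)⁻¹ * ∑ i, A i j.val * (y i - A.mulVec β₀ i) = r * z j)
    (hirrep : ∀ w : {j : Fin M // j ∈ P} → ℝ, (∀ j, w j ≤ 1) →
      ∀ k : {j : Fin M // j ∉ P}, ((gramCP A P) * (gramPP A P)⁻¹).mulVec w k < 1 - η₀)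
    (hbound : ∀ k : {j : Fin M // j ∉ P},
      (Real.sqrt N)⁻¹ * ∑ i, matH A P i k * (d i + e i) < r * η₀) :
    ∀ b : Fin M → ℝ, (∀ n, 0 ≤ b n) →
      (1 / (2 * N)) * ∑ i, (y i - A.mulVec β₀ i) ^ 2 + r * ∑ n, β₀ n ≤
        (1 / (2 * N)) * ∑ i, (y i - A.mulVec b i) ^ 2 + r * ∑ n, b n := by
  -- basic facts
  have hNne : (N:ℝ) ≠ 0 := Nat.cast_ne_zero.mpr hN.ne'
  have hNpos : (0:ℝ) < N := Nat.cast_pos.mpr hN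
  have hsqrt : (Real.sqrt N)⁻¹ * (Real.sqrt N)⁻¹ = (N:ℝ)⁻¹ := by
    rw [← mul_inv, Real.mul_self_sqrt (by positivity)]
  set res : Fin N → ℝ := fun i => y i - A.mulVec β₀ i with hresdef
  set c : Fin M → ℝ := fun j => (N : ℝ)⁻¹ * ∑ i, A i j * res i with hcdef
  set Ginv := (gramPP A P)⁻¹ with hGinvdef
  have hmulinv : gramPP A P * Ginv = 1 := Matrix.mul_nonsing_inv _ hG
  have hGsymm : (gramPP A P)ᵀ = gramPP A P := by
    unfold gramPP
    rw [Matrix.transpose_smul, Matrix.transpose_mul, Matrix.transpose_transpose]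
  have hGinvsymm : ∀ a b, Ginv a b = Ginv b a := by
    have h : Ginvᵀ = Ginv := by
      rw [hGinvdef, Matrix.transpose_nonsing_inv, hGsymm]
    intro a b
    have := congrFun (congrFun h b) a
    simpa [Matrix.transpose_apply] using this
  set X : Matrix {j : Fin M // j ∈ P} {j : Fin M // j ∉ P} ℝ :=
    (N : ℝ)⁻¹ • ((colsIn A P)ᵀ * colsOut A P) with hXdef
  set D : Matrix {j : Fin M // j ∈ P} {j : Fin M // j ∉ P} ℝ := Ginv * X with hDdef
  have hmatH : ∀ i (k : {j : Fin M // j ∉ P}), matH A P i k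
      = (Real.sqrt N)⁻¹ * (A i k.val - (colsIn A P * D) i k) := by
    intro i k
    simp only [matH, hDdef, hXdef, ← hGinvdef, Matrix.mul_assoc, Matrix.smul_apply,
      Matrix.sub_apply, smul_eq_mul, colsOut, Matrix.submatrix_apply, id_eq]
  have hcolmul : ∀ i (k : {j : Fin M // j ∉ P}),
      (colsIn A P * D) i k = ∑ j' : {j : Fin M // j ∈ P}, A i j'.val * D j' k := by
    intro i k
    rw [Matrix.mul_apply]
    exact Finset.sum_congr rfl fun j' _ => rfl
  have hK : ∀ j' : {j : Fin M // j ∈ P},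
      ∑ i, A i j'.val * res i = (N:ℝ) * (r * z j') := by
    intro j'
    have := hKKT j'
    field_simp at this ⊢
    linarith [this]
  -- KKT in c form
  have hKc : ∀ j (hj : j ∈ P), c j = r * z ⟨j, hj⟩ := by
    intro j hj
    simp only [hcdef]
    rw [hK ⟨j, hj⟩]
    field_simp
  -- orthogonality of H against columns of A in P
  have hGD : gramPP A P * D = X := by
    rw [hDdef, ← Matrix.mul_assoc, hmulinv, Matrix.one_mul]
  have hS3 : ∀ (k : {j : Fin M // j ∉ P}) (jp) (hjp : jp ∈ P),
      ∑ i, matH A P i k * A i jp = 0 := by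
    intro k jp hjp
    have key : ∑ i, (colsIn A P * D) i k * A i jp = ∑ i, A i k.val * A i jp := by
      calc ∑ i, (colsIn A P * D) i k * A i jp
          = ∑ i, ∑ j' : {j : Fin M // j ∈ P}, A i j'.val * D j' k * A i jp := by
            refine Finset.sum_congr rfl fun i _ => ?_
            rw [hcolmul, Finset.sum_mul]
        _ = ∑ j' : {j : Fin M // j ∈ P}, D j' k * ∑ i, A i jp * A i j'.val := by
            rw [Finset.sum_comm]
            refine Finset.sum_congr rfl fun j' _ => ?_
            rw [Finset.mul_sum]
            exact Finset.sum_congr rfl fun i _ => by ring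
        _ = ∑ j' : {j : Fin M // j ∈ P}, D j' k * ((N:ℝ) * gramPP A P ⟨jp, hjp⟩ j') := by
            refine Finset.sum_congr rfl fun j' _ => ?_
            congr 1
            simp only [gramPP, Matrix.smul_apply, Matrix.mul_apply, Matrix.transpose_apply,
              colsIn, Matrix.submatrix_apply, id_eq, smul_eq_mul]
            rw [← mul_assoc, mul_inv_cancel₀ hNne, one_mul]
        _ = (N:ℝ) * ∑ j' : {j : Fin M // j ∈ P}, gramPP A P ⟨jp, hjp⟩ j' * D j' k := by
            rw [Finset.mul_sum]
            exact Finset.sum_congr rfl fun j' _ => by ring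
        _ = (N:ℝ) * (gramPP A P * D) ⟨jp, hjp⟩ k := by rw [Matrix.mul_apply]
        _ = (N:ℝ) * X ⟨jp, hjp⟩ k := by rw [hGD]
        _ = ∑ i, A i k.val * A i jp := by
            simp only [hXdef, Matrix.smul_apply, Matrix.mul_apply, Matrix.transpose_apply,
              colsIn, colsOut, Matrix.submatrix_apply, id_eq, smul_eq_mul]
            rw [← mul_assoc, mul_inv_cancel₀ hNne, one_mul]
            exact Finset.sum_congr rfl fun i _ => by ring
    calc ∑ i, matH A P i k * A i jp
        = (Real.sqrt N)⁻¹ * ∑ i, (A i k.val * A i jp - (colsIn A P * D) i k * A i jp) := by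
          rw [Finset.mul_sum]
          refine Finset.sum_congr rfl fun i _ => ?_
          rw [hmatH]
          ring
      _ = 0 := by rw [Finset.sum_sub_distrib, key]; ring
  -- residual decomposition
  have hresdec : ∀ i, res i = (∑ j₂, A i j₂ * (βstar j₂ - β₀ j₂)) + (d i + e i) := by
    intro i
    simp only [hresdef, hy, Matrix.mulVec, dotProduct, mul_sub, Finset.sum_sub_distrib]
    ring
  -- key strict dual feasibility off the support
  have hAkey : ∀ j, j ∉ P → c j < r := by
    intro j hj
    set k : {j : Fin M // j ∉ P} := ⟨j, hj⟩ with hkdef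
    -- H^T res = H^T (d+e)
    have hII : ∑ i, matH A P i k * res i = ∑ i, matH A P i k * (d i + e i) := by
      have : ∑ i, matH A P i k * res i - ∑ i, matH A P i k * (d i + e i)
          = ∑ j₂, (βstar j₂ - β₀ j₂) * ∑ i, matH A P i k * A i j₂ := by
        rw [← Finset.sum_sub_distrib]
        rw [show (∑ j₂, (βstar j₂ - β₀ j₂) * ∑ i, matH A P i k * A i j₂)
            = ∑ j₂, ∑ i, (βstar j₂ - β₀ j₂) * (matH A P i k * A i j₂) from
          Finset.sum_congr rfl fun j₂ _ => Finset.mul_sum _ _ _]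
        rw [Finset.sum_comm]
        refine Finset.sum_congr rfl fun i _ => ?_
        rw [hresdec i]
        rw [show matH A P i k * (∑ j₂, A i j₂ * (βstar j₂ - β₀ j₂) + (d i + e i))
            - matH A P i k * (d i + e i)
            = ∑ j₂, matH A P i k * (A i j₂ * (βstar j₂ - β₀ j₂)) by
          rw [← Finset.mul_sum]; ring]
        exact Finset.sum_congr rfl fun j₂ _ => by ring
      have hz3 : ∑ j₂, (βstar j₂ - β₀ j₂) * ∑ i, matH A P i k * A i j₂ = 0 := by
        refine Finset.sum_eq_zero fun j₂ _ => ?_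
        by_cases hj₂ : j₂ ∈ P
        · rw [hS3 k j₂ hj₂, mul_zero]
        · rw [hβstar j₂ hj₂, hβ₀supp j₂ hj₂]
          ring
      rw [hz3] at this
      linarith [this]
    -- value identity
    have hS1 : ∑ i, (colsIn A P * D) i k * res i
        = (N:ℝ) * (r * ∑ j' : {j : Fin M // j ∈ P}, D j' k * z j') := by
      calc ∑ i, (colsIn A P * D) i k * res i
          = ∑ i, ∑ j' : {j : Fin M // j ∈ P}, A i j'.val * D j' k * res i := by
            refine Finset.sum_congr rfl fun i _ => ?_
            rw [hcolmul, Finset.sum_mul]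
        _ = ∑ j' : {j : Fin M // j ∈ P}, D j' k * ∑ i, A i j'.val * res i := by
            rw [Finset.sum_comm]
            refine Finset.sum_congr rfl fun j' _ => ?_
            rw [Finset.mul_sum]
            exact Finset.sum_congr rfl fun i _ => by ring
        _ = ∑ j' : {j : Fin M // j ∈ P}, D j' k * ((N:ℝ) * (r * z j')) := by
            exact Finset.sum_congr rfl fun j' _ => by rw [hK j']
        _ = (N:ℝ) * (r * ∑ j' : {j : Fin M // j ∈ P}, D j' k * z j') := by
            rw [Finset.mul_sum, Finset.mul_sum]
            exact Finset.sum_congr rfl fun j' _ => by ring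
    have hS2 : (gramCP A P * Ginv).mulVec z k
        = ∑ j' : {j : Fin M // j ∈ P}, D j' k * z j' := by
      rw [Matrix.mulVec, dotProduct]
      refine Finset.sum_congr rfl fun j' _ => ?_
      congr 1
      rw [Matrix.mul_apply]
      rw [show D j' k = ∑ l, Ginv j' l * X l k from Matrix.mul_apply]
      refine Finset.sum_congr rfl fun l _ => ?_
      rw [hGinvsymm l j']
      simp only [gramCP, hXdef, Matrix.smul_apply, Matrix.mul_apply, Matrix.transpose_apply,
        colsIn, colsOut, Matrix.submatrix_apply, id_eq, smul_eq_mul]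
      rw [show (∑ i, A i k.val * A i l.val) = ∑ i, A i l.val * A i k.val from
        Finset.sum_congr rfl fun i _ => by ring]
      ring
    have hI : (Real.sqrt N)⁻¹ * ∑ i, matH A P i k * res i
        = c j - r * ((gramCP A P * Ginv).mulVec z k) := by
      have expand : ∑ i, matH A P i k * res i
          = (Real.sqrt N)⁻¹ * (∑ i, A i k.val * res i - ∑ i, (colsIn A P * D) i k * res i) := by
        rw [show (∑ i, A i k.val * res i - ∑ i, (colsIn A P * D) i k * res i)
            = ∑ i, (A i k.val * res i - (colsIn A P * D) i k * res i) from
          (Finset.sum_sub_distrib _ _).symm, Finset.mul_sum]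
        refine Finset.sum_congr rfl fun i _ => ?_
        rw [hmatH]
        ring
      rw [expand, ← mul_assoc, hsqrt, hS1, hS2]
      have : c j = (N:ℝ)⁻¹ * ∑ i, A i k.val * res i := rfl
      rw [this]
      field_simp
    have h1 := hirrep z hz k
    have h2 := hbound k
    rw [hII] at hI
    have h3 : c j = r * ((gramCP A P * Ginv).mulVec z k)
        + (Real.sqrt N)⁻¹ * ∑ i, matH A P i k * (d i + e i) := by linarith
    rw [hGinvdef] at h1
    nlinarith [h1, h2, hr]
  -- quadratic expansion of the objective
  have hexp : ∀ v : Fin M → ℝ,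
      (1 / (2 * (N:ℝ))) * ∑ i, (y i - A.mulVec (fun j => β₀ j + v j) i) ^ 2
          + r * ∑ n, (β₀ n + v n)
      = ((1 / (2 * (N:ℝ))) * ∑ i, res i ^ 2 + r * ∑ n, β₀ n)
          + ∑ j, (r - c j) * v j
          + (1 / (2 * (N:ℝ))) * ∑ i, (∑ j, A i j * v j) ^ 2 := by
    intro v
    have hu : ∀ i, y i - A.mulVec (fun j => β₀ j + v j) i = res i - ∑ j, A i j * v j := by
      intro i
      simp only [hresdef, Matrix.mulVec, dotProduct, mul_add, Finset.sum_add_distrib]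
      ring
    have hkey : ∑ i, res i * ∑ j, A i j * v j = (N:ℝ) * ∑ j, c j * v j := by
      calc ∑ i, res i * ∑ j, A i j * v j
          = ∑ i, ∑ j, res i * (A i j * v j) := by
            exact Finset.sum_congr rfl fun i _ => Finset.mul_sum _ _ _
        _ = ∑ j, (∑ i, A i j * res i) * v j := by
            rw [Finset.sum_comm]
            refine Finset.sum_congr rfl fun j _ => ?_
            rw [Finset.sum_mul]
            exact Finset.sum_congr rfl fun i _ => by ring
        _ = (N:ℝ) * ∑ j, c j * v j := by
            rw [Finset.mul_sum]
            refine Finset.sum_congr rfl fun j _ => ?_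
            have : c j = (N:ℝ)⁻¹ * ∑ i, A i j * res i := rfl
            rw [this]
            field_simp
    have hsq : ∑ i, (res i - ∑ j, A i j * v j) ^ 2
        = ∑ i, res i ^ 2 - 2 * ∑ i, res i * ∑ j, A i j * v j
          + ∑ i, (∑ j, A i j * v j) ^ 2 := by
      rw [Finset.mul_sum, ← Finset.sum_sub_distrib, ← Finset.sum_add_distrib]
      exact Finset.sum_congr rfl fun i _ => by ring
    have hrv : ∑ n, (β₀ n + v n) = ∑ n, β₀ n + ∑ n, v n := Finset.sum_add_distrib
    have hLsplit : ∑ j, (r - c j) * v j = r * ∑ j, v j - ∑ j, c j * v j := by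
      rw [Finset.mul_sum, ← Finset.sum_sub_distrib]
      exact Finset.sum_congr rfl fun j _ => by ring
    calc (1 / (2 * (N:ℝ))) * ∑ i, (y i - A.mulVec (fun j => β₀ j + v j) i) ^ 2
          + r * ∑ n, (β₀ n + v n)
        = (1 / (2 * (N:ℝ))) * (∑ i, res i ^ 2 - 2 * ((N:ℝ) * ∑ j, c j * v j)
            + ∑ i, (∑ j, A i j * v j) ^ 2) + r * (∑ n, β₀ n + ∑ n, v n) := by
          rw [show (∑ i, (y i - A.mulVec (fun j => β₀ j + v j) i) ^ 2)
              = ∑ i, (res i - ∑ j, A i j * v j) ^ 2 from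
            Finset.sum_congr rfl fun i _ => by rw [hu i], hsq, hkey, hrv]
      _ = ((1 / (2 * (N:ℝ))) * ∑ i, res i ^ 2 + r * ∑ n, β₀ n)
          + (r * ∑ j, v j - ∑ j, c j * v j)
          + (1 / (2 * (N:ℝ))) * ∑ i, (∑ j, A i j * v j) ^ 2 := by
          field_simp
          ring
      _ = _ := by rw [hLsplit]
  -- main argument
  intro b hb
  set v : Fin M → ℝ := fun j => b j - β₀ j with hvdef
  have hbv : b = fun j => β₀ j + v j := by funext j; simp [hvdef]
  rw [hbv]
  have hgoal := hexp v
  rw [hgoal]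
  have hQ : 0 ≤ (1 / (2 * (N:ℝ))) * ∑ i, (∑ j, A i j * v j) ^ 2 := by positivity
  -- split the linear term
  set v' : Fin M → ℝ := fun j => if j ∈ P then v j else 0 with hv'def
  have hL1 : ∑ j, (r - c j) * v j
      = ∑ j, (r - c j) * v' j + ∑ j ∈ Pᶜ, (r - c j) * v j := by
    have e1 : ∑ j, (r - c j) * v' j = ∑ j ∈ P, (r - c j) * v j := by
      rw [← Finset.sum_subset (Finset.subset_univ P)
        (fun x _ hx => by simp [hv'def, hx])]
      exact Finset.sum_congr rfl fun j hj => by simp [hv'def, hj]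
    rw [e1, Finset.sum_add_sum_compl (s := P) (f := fun j => (r - c j) * v j)]
  have hL2 : 0 ≤ ∑ j ∈ Pᶜ, (r - c j) * v j := by
    refine Finset.sum_nonneg fun j hj => ?_
    have hjP : j ∉ P := Finset.mem_compl.mp hj
    have h1 : 0 < r - c j := sub_pos.mpr (hAkey j hjP)
    have h2 : 0 ≤ v j := by
      simp only [hvdef]
      rw [hβ₀supp j hjP]
      simpa using hb j
    positivity
  -- the restricted part, via the minimality of β₀
  set L' : ℝ := ∑ j, (r - c j) * v' j with hL'def
  set Q' : ℝ := (1 / (2 * (N:ℝ))) * ∑ i, (∑ j, A i j * v' j) ^ 2 with hQ'def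
  have hQ'0 : 0 ≤ Q' := by rw [hQ'def]; positivity
  have hstep : ∀ t : ℝ, 0 < t → t ≤ 1 → 0 ≤ t * L' + t ^ 2 * Q' := by
    intro t ht0 ht1
    have hfeas1 : ∀ n, 0 ≤ β₀ n + t * v' n := by
      intro n
      by_cases hn : n ∈ P
      · have : β₀ n + t * v' n = (1 - t) * β₀ n + t * b n := by
          simp only [hv'def, hvdef, if_pos hn]
          ring
        rw [this]
        have := hβ₀pos n
        have := hb n
        nlinarith
      · simp only [hv'def, if_neg hn, mul_zero, add_zero]
        exact hβ₀pos n
    have hfeas2 : ∀ j, j ∉ P → β₀ j + t * v' j = 0 := by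
      intro j hj
      simp [hv'def, hj, hβ₀supp j hj]
    have hmin := hβ₀min (fun j => β₀ j + t * v' j) hfeas1 hfeas2
    have hev := hexp (fun j => t * v' j)
    have e2 : ∑ j, (r - c j) * (t * v' j) = t * L' := by
      rw [hL'def, Finset.mul_sum]
      exact Finset.sum_congr rfl fun j _ => by ring
    have e3 : (1 / (2 * (N:ℝ))) * ∑ i, (∑ j, A i j * (t * v' j)) ^ 2 = t ^ 2 * Q' := by
      rw [hQ'def]
      rw [show (∑ i, (∑ j, A i j * (t * v' j)) ^ 2)
          = ∑ i, t ^ 2 * (∑ j, A i j * v' j) ^ 2 from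
        Finset.sum_congr rfl fun i _ => by
          rw [show (∑ j, A i j * (t * v' j)) = t * ∑ j, A i j * v' j by
            rw [Finset.mul_sum]; exact Finset.sum_congr rfl fun j _ => by ring]
          ring]
      rw [← Finset.mul_sum]
      ring
    rw [hev, e2, e3] at hmin
    linarith
  have hL'0 : 0 ≤ L' := by
    by_contra h
    push_neg at h
    set t : ℝ := min 1 (-L' / (2 * (Q' + 1))) with htdef
    have hden : (0:ℝ) < 2 * (Q' + 1) := by linarith
    have ht0 : 0 < t := lt_min one_pos (div_pos (neg_pos.mpr h) hden)
    have ht1 : t ≤ 1 := min_le_left _ _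
    have ht2 : t * (2 * (Q' + 1)) ≤ -L' := by
      have := min_le_right 1 (-L' / (2 * (Q' + 1)))
      rw [le_div_iff₀ hden] at this
      calc t * (2 * (Q' + 1)) ≤ (-L' / (2 * (Q' + 1))) * (2 * (Q' + 1)) := by
            exact mul_le_mul_of_nonneg_right (min_le_right _ _) hden.le
        _ = -L' := div_mul_cancel₀ _ hden.ne'
    have hst := hstep t ht0 ht1
    nlinarith [mul_le_mul_of_nonneg_left ht2 ht0.le, mul_pos ht0 ht0,
      mul_neg_of_pos_of_neg ht0 h, hst, hQ'0]
  have hLnn : 0 ≤ ∑ j, (r - c j) * v j := by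
    rw [hL1]
    have := hL'0
    linarith
  linarith [hQ, hLnn]
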